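/- Let A and B be n × n real positive definite matrices. Then the minimum over orthogonal matrices Q ∈ O(n) of ‖A^{1/2} − Q B^{1/2}‖_F² equals Tr(A) + Tr(B) − 2 Tr((A^{1/2} B A^{1/2})^{1/2}), where M^{1/2} denotes the positive semidefinite square root of M and ‖·‖_F is the Frobenius norm. In particular, the minimum is attained at Q* = (A^{1/2} B A^{1/2})^{−1/2} A^{1/2} B^{1/2}. -/

import Mathlib

open Matrix
open scoped Classical

/-- The positive semidefinite square root of a positive semidefinite matrix
(junk value `0` if the matrix is not positive semidefinite). -/
noncomputable def matSqrt {n : ℕ} (A : Matrix (Fin n) (Fin n) ℝ) :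
    Matrix (Fin n) (Fin n) ℝ :=
  if hA : A.PosSemidef then
    (hA.isHermitian.eigenvectorUnitary : Matrix (Fin n) (Fin n) ℝ) *
      diagonal ((↑) ∘ (Real.sqrt ·) ∘ hA.isHermitian.eigenvalues) *
      (star hA.isHermitian.eigenvectorUnitary : Matrix (Fin n) (Fin n) ℝ)
  else 0

/-- The Frobenius norm of a real matrix, `‖M‖_F = √(Tr(MᵀM))`. -/
noncomputable def frobNorm {n : ℕ} (M : Matrix (Fin n) (Fin n) ℝ) : ℝ :=
  Real.sqrt (Mᵀ * M).trace

section ProcrustesAux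

variable {n : ℕ}

lemma ctr_eq (M : Matrix (Fin n) (Fin n) ℝ) : Mᴴ = Mᵀ := rfl

lemma matSqrt_posSemidef {A : Matrix (Fin n) (Fin n) ℝ} (h : A.PosSemidef) :
    (matSqrt A).PosSemidef := by
  rw [matSqrt, dif_pos h]
  have hd : (diagonal ((↑) ∘ (Real.sqrt ·) ∘ h.isHermitian.eigenvalues) :
      Matrix (Fin n) (Fin n) ℝ).PosSemidef := by
    rw [posSemidef_diagonal_iff]; intro i; exact Real.sqrt_nonneg _
  rw [star_eq_conjTranspose]
  exact hd.mul_mul_conjTranspose_same _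

lemma matSqrt_mul_self {A : Matrix (Fin n) (Fin n) ℝ} (h : A.PosSemidef) :
    matSqrt A * matSqrt A = A := by
  rw [matSqrt, dif_pos h]
  have hU := Unitary.coe_star_mul_self h.isHermitian.eigenvectorUnitary
  have hs : A = (h.isHermitian.eigenvectorUnitary : Matrix (Fin n) (Fin n) ℝ) *
      diagonal (RCLike.ofReal ∘ h.isHermitian.eigenvalues) *
      (star h.isHermitian.eigenvectorUnitary : Matrix (Fin n) (Fin n) ℝ) :=
    h.isHermitian.spectral_theorem
  have hD : (diagonal ((↑) ∘ (Real.sqrt ·) ∘ h.isHermitian.eigenvalues) :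
      Matrix (Fin n) (Fin n) ℝ) * diagonal ((↑) ∘ (Real.sqrt ·) ∘ h.isHermitian.eigenvalues)
      = diagonal (RCLike.ofReal ∘ h.isHermitian.eigenvalues) := by
    rw [diagonal_mul_diagonal]; congr 1; funext i
    simp [Real.mul_self_sqrt (h.eigenvalues_nonneg i)]
  conv_rhs => rw [hs]
  calc _ = (h.isHermitian.eigenvectorUnitary : Matrix (Fin n) (Fin n) ℝ) *
      (diagonal ((↑) ∘ (Real.sqrt ·) ∘ h.isHermitian.eigenvalues) *
      ((star h.isHermitian.eigenvectorUnitary : Matrix (Fin n) (Fin n) ℝ) *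
        (h.isHermitian.eigenvectorUnitary : Matrix (Fin n) (Fin n) ℝ)) *
      diagonal ((↑) ∘ (Real.sqrt ·) ∘ h.isHermitian.eigenvalues)) *
      (star h.isHermitian.eigenvectorUnitary : Matrix (Fin n) (Fin n) ℝ) := by
        simp only [mul_assoc]
    _ = _ := by rw [hU, mul_one, hD]

lemma matSqrt_transpose {A : Matrix (Fin n) (Fin n) ℝ} (h : A.PosSemidef) :
    (matSqrt A)ᵀ = matSqrt A := by
  rw [← ctr_eq]; exact (matSqrt_posSemidef h).1

lemma trace_transpose_mul_self_nonneg (N : Matrix (Fin n) (Fin n) ℝ) :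
    0 ≤ (Nᵀ * N).trace := by
  rw [Matrix.trace]
  refine Finset.sum_nonneg fun i _ => ?_
  rw [Matrix.diag_apply, Matrix.mul_apply]
  exact Finset.sum_nonneg fun j _ => by simpa using mul_self_nonneg (N j i)

lemma frobNorm_sq (N : Matrix (Fin n) (Fin n) ℝ) :
    frobNorm N ^ 2 = (Nᵀ * N).trace :=
  Real.sq_sqrt (trace_transpose_mul_self_nonneg N)

lemma posDef_conj {B S : Matrix (Fin n) (Fin n) ℝ} (hB : B.PosDef)
    (hSt : Sᵀ = S) (hdet : S.det ≠ 0) : (S * B * S).PosDef := by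
  have hinj : Function.Injective (S.mulVec) :=
    mulVec_injective_iff_isUnit.2 ((Matrix.isUnit_iff_isUnit_det S).2 (Ne.isUnit hdet))
  rw [posDef_iff_dotProduct_mulVec]
  constructor
  · show (S * B * S)ᴴ = S * B * S
    rw [conjTranspose_mul, conjTranspose_mul, ctr_eq, ctr_eq, hSt,
      show Bᵀ = B from hB.1, mul_assoc]
  · intro x hx
    have hSx : S *ᵥ x ≠ 0 := fun h => hx (hinj (h.trans (S.mulVec_zero).symm))
    have := hB.dotProduct_mulVec_pos hSx
    calc 0 < dotProduct (star (S *ᵥ x)) (B *ᵥ (S *ᵥ x)) := this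
      _ = dotProduct (star x) ((S * B * S) *ᵥ x) := by
          rw [star_trivial, star_trivial, ← mulVec_mulVec, ← mulVec_mulVec,
            dotProduct_mulVec x, (mulVec_transpose S x).symm, hSt]

lemma trace_psd_mul_unitary_le {P W : Matrix (Fin n) (Fin n) ℝ}
    (hP : P.PosSemidef) (hW : W ∈ Matrix.unitaryGroup (Fin n) ℝ) :
    (P * W).trace ≤ P.trace := by
  have hH := hP.1
  set U : Matrix (Fin n) (Fin n) ℝ := (hH.eigenvectorUnitary : Matrix (Fin n) (Fin n) ℝ) with hU
  set D : Matrix (Fin n) (Fin n) ℝ := diagonal (RCLike.ofReal ∘ hH.eigenvalues) with hD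
  have hspec : P = U * D * star U := hH.spectral_theorem
  have hUm : U ∈ Matrix.unitaryGroup (Fin n) ℝ := hH.eigenvectorUnitary.2
  set V := star U * W * U with hV
  have hVm : V ∈ Matrix.unitaryGroup (Fin n) ℝ := mul_mem (mul_mem (Unitary.star_mem hUm) hW) hUm
  have hVV : V * star V = 1 := (Unitary.mem_iff.mp hVm).2
  have hdiag : ∀ i, V i i ≤ 1 := by
    intro i
    have h1 : ∑ j, V i j * V i j = 1 := by
      have := congrArg (fun M => M i i) hVV
      simpa [Matrix.mul_apply, Matrix.one_apply, Matrix.conjTranspose_apply] using this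
    nlinarith [Finset.single_le_sum (f := fun j => V i j * V i j)
      (fun j _ => mul_self_nonneg (V i j)) (Finset.mem_univ i), mul_self_nonneg (V i i)]
  have h2 : (P * W).trace = (D * V).trace := by
    rw [hspec]
    calc (U * D * star U * W).trace = (U * (D * (star U * W))).trace := by
          rw [mul_assoc, mul_assoc]
      _ = ((D * (star U * W)) * U).trace := trace_mul_comm _ _
      _ = (D * V).trace := by rw [hV, mul_assoc, mul_assoc]
  have h3 : P.trace = D.trace := by
    rw [hspec]
    calc (U * D * star U).trace = (star U * (U * D)).trace := (trace_mul_comm _ _).symm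
      _ = ((star U * U) * D).trace := by rw [mul_assoc]
      _ = D.trace := by rw [(Unitary.mem_iff.mp hUm).1, one_mul]
  rw [h2, h3, Matrix.trace, Matrix.trace]
  refine Finset.sum_le_sum fun i _ => ?_
  have hnn : (0:ℝ) ≤ hH.eigenvalues i := hP.eigenvalues_nonneg i
  simp only [Matrix.diag_apply, Matrix.diagonal_mul, hD, Matrix.diagonal_apply_eq,
    Function.comp_apply, RCLike.ofReal_real_eq_id, id_eq]
  exact mul_le_of_le_one_right hnn (hdiag i)


end ProcrustesAux

/-- For positive definite `A, B`, the minimum over orthogonal `Q` of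
`‖A^{1/2} − Q B^{1/2}‖_F²` equals `Tr A + Tr B − 2 Tr((A^{1/2} B A^{1/2})^{1/2})`,
and it is attained at `Q* = (A^{1/2} B A^{1/2})^{−1/2} A^{1/2} B^{1/2}`. -/
theorem stmt6 {n : ℕ} (A B : Matrix (Fin n) (Fin n) ℝ)
    (hA : A.PosDef) (hB : B.PosDef) :
    IsLeast
      {r : ℝ | ∃ Q ∈ Matrix.orthogonalGroup (Fin n) ℝ,
        r = frobNorm (matSqrt A - Q * matSqrt B) ^ 2}
      (A.trace + B.trace - 2 * (matSqrt (matSqrt A * B * matSqrt A)).trace) ∧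
    (matSqrt (matSqrt A * B * matSqrt A))⁻¹ * matSqrt A * matSqrt B ∈
      Matrix.orthogonalGroup (Fin n) ℝ ∧
    frobNorm (matSqrt A -
        ((matSqrt (matSqrt A * B * matSqrt A))⁻¹ * matSqrt A * matSqrt B) * matSqrt B) ^ 2 =
      A.trace + B.trace - 2 * (matSqrt (matSqrt A * B * matSqrt A)).trace := by
  have hAps := hA.posSemidef
  have hBps := hB.posSemidef
  set S := matSqrt A with hSdef
  set T := matSqrt B with hTdef
  have hSps : S.PosSemidef := matSqrt_posSemidef hAps
  have hTps : T.PosSemidef := matSqrt_posSemidef hBps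
  have hSS : S * S = A := matSqrt_mul_self hAps
  have hTT : T * T = B := matSqrt_mul_self hBps
  have hSt : Sᵀ = S := matSqrt_transpose hAps
  have hTt : Tᵀ = T := matSqrt_transpose hBps
  have hSdet : S.det ≠ 0 := by
    intro h
    have h2 := hA.det_pos
    rw [← hSS, det_mul, h, mul_zero] at h2
    exact lt_irrefl _ h2
  have hM : (S * B * S).PosDef := posDef_conj hB hSt hSdet
  set M := S * B * S with hMdef
  set R := matSqrt M with hRdef
  have hRps : R.PosSemidef := matSqrt_posSemidef hM.posSemidef
  have hRR : R * R = M := matSqrt_mul_self hM.posSemidef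
  have hRt : Rᵀ = R := matSqrt_transpose hM.posSemidef
  have hRdet : R.det ≠ 0 := by
    intro h
    have h2 := hM.det_pos
    rw [← hRR, det_mul, h, mul_zero] at h2
    exact lt_irrefl _ h2
  have hRinv : R⁻¹ * R = 1 := nonsing_inv_mul R (Ne.isUnit hRdet)
  have hRinv' : R * R⁻¹ = 1 := mul_nonsing_inv R (Ne.isUnit hRdet)
  set Q0 := R⁻¹ * S * T with hQ0def
  have hST : R * Q0 = S * T := by
    rw [hQ0def, ← mul_assoc, ← mul_assoc, hRinv', one_mul]
  have hQ0t : Q0ᵀ = T * S * R⁻¹ := by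
    rw [hQ0def, transpose_mul, transpose_mul, transpose_nonsing_inv, hRt, hSt, hTt, mul_assoc]
  have hSTTS : S * T * (T * S) = M := by
    rw [hMdef, ← hTT]
    noncomm_ring
  have hQ0mem : Q0 ∈ Matrix.orthogonalGroup (Fin n) ℝ := by
    rw [Matrix.mem_orthogonalGroup_iff]
    have hstar : star Q0 = Q0ᵀ := by rw [star_eq_conjTranspose, ctr_eq]
    rw [hQ0t]
    calc Q0 * (T * S * R⁻¹) = (R⁻¹ * (S * T)) * (T * S) * R⁻¹ := by
          rw [hQ0def]; noncomm_ring
      _ = R⁻¹ * (S * T * (T * S)) * R⁻¹ := by noncomm_ring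
      _ = R⁻¹ * (R * R) * R⁻¹ := by rw [hSTTS, hRR]
      _ = 1 := by rw [← mul_assoc, hRinv, one_mul, hRinv']
  -- expansion of the Frobenius norm squared
  have expand : ∀ Q ∈ Matrix.orthogonalGroup (Fin n) ℝ,
      frobNorm (S - Q * T) ^ 2 = A.trace + B.trace - 2 * (S * Q * T).trace := by
    intro Q hQ
    have hQQ : Qᵀ * Q = 1 := by
      have := (Matrix.mem_orthogonalGroup_iff' (Fin n) ℝ).mp hQ
      exact this
    rw [frobNorm_sq]
    have hexp : (S - Q * T)ᵀ * (S - Q * T)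
        = A + B - (S * (Q * T) + T * Qᵀ * S) := by
      rw [transpose_sub, hSt, transpose_mul, hTt, sub_mul, mul_sub, mul_sub, hSS]
      have h4 : T * Qᵀ * (Q * T) = B := by
        rw [mul_assoc, ← mul_assoc Qᵀ, hQQ, one_mul, hTT]
      rw [h4]
      noncomm_ring
    rw [hexp, trace_sub, trace_add, trace_add]
    have h5 : (T * Qᵀ * S).trace = (S * (Q * T)).trace := by
      rw [← trace_transpose (T * Qᵀ * S), transpose_mul, transpose_mul, hSt, hTt,
        transpose_transpose]
    rw [h5, ← mul_assoc]
    ring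
  -- the cross term bound
  have cross : ∀ Q ∈ Matrix.orthogonalGroup (Fin n) ℝ, (S * Q * T).trace ≤ R.trace := by
    intro Q hQ
    have hTS : Q0ᵀ * R = T * S := by
      rw [hQ0t, mul_assoc, hRinv, mul_one]
    have h6 : (S * Q * T).trace = (R * (Q * Q0ᵀ)).trace := by
      calc (S * Q * T).trace = (T * (S * Q)).trace := trace_mul_comm _ _
        _ = (T * S * Q).trace := by rw [mul_assoc]
        _ = (Q0ᵀ * R * Q).trace := by rw [hTS]
        _ = (Q * (Q0ᵀ * R)).trace := trace_mul_comm _ _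
        _ = (Q * Q0ᵀ * R).trace := by rw [← mul_assoc]
        _ = (R * (Q * Q0ᵀ)).trace := trace_mul_comm _ _
    rw [h6]
    refine trace_psd_mul_unitary_le hRps ?_
    refine mul_mem hQ ?_
    have : star Q0 = Q0ᵀ := by rw [star_eq_conjTranspose, ctr_eq]
    rw [← this]
    exact Unitary.star_mem hQ0mem
  -- equality at Q0
  have crossEq : (S * Q0 * T).trace = R.trace := by
    have hTS : Q0ᵀ * R = T * S := by
      rw [hQ0t, mul_assoc, hRinv, mul_one]
    have hQQ0 : Q0 * Q0ᵀ = 1 := by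
      have := (Matrix.mem_orthogonalGroup_iff (Fin n) ℝ).mp hQ0mem
      exact this
    calc (S * Q0 * T).trace = (T * (S * Q0)).trace := trace_mul_comm _ _
      _ = (T * S * Q0).trace := by rw [mul_assoc]
      _ = (Q0ᵀ * R * Q0).trace := by rw [hTS]
      _ = (Q0 * (Q0ᵀ * R)).trace := trace_mul_comm _ _
      _ = (Q0 * Q0ᵀ * R).trace := by rw [← mul_assoc]
      _ = R.trace := by rw [hQQ0, one_mul]
  have attEq : frobNorm (S - Q0 * T) ^ 2 = A.trace + B.trace - 2 * R.trace := by
    rw [expand Q0 hQ0mem, crossEq]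
  refine ⟨⟨⟨Q0, hQ0mem, attEq.symm⟩, ?_⟩, hQ0mem, attEq⟩
  rintro r ⟨Q, hQ, rfl⟩
  rw [expand Q hQ]
  have := cross Q hQ
  linarith
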